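/- arXiv:1505.03328 — 5 statements merged into one kernel-verified Lean document; each statement's English description precedes it below -/
import Mathlib

section
/- Let G be a finite abelian group and A ⊆ G a nonempty subset that is not contained in any coset of a proper subgroup of G. Then either A·A⁻¹ = G or |A·A| ≥ (3/2)|A|. -/
open Pointwise

/-- If a nonempty subset `A` of a finite abelian group `G` is not contained
in any coset of a proper subgroup, then either `A·A⁻¹ = G` or `|A·A| ≥ (3/2)|A|`. -/
theorem stmt0 {G : Type*} [CommGroup G] [Fintype G] [DecidableEq G]
    (A : Finset G) (hA : A.Nonempty)
    (hcoset : ¬ ∃ (H : Subgroup G), H ≠ ⊤ ∧ ∃ x : G, (A : Set G) ⊆ x • (H : Set G)) :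
    A * A⁻¹ = Finset.univ ∨ 3 * A.card ≤ 2 * (A * A).card := by
  by_cases hbig : 3 * A.card ≤ 2 * (A * A).card
  · exact Or.inr hbig
  left
  push_neg at hbig
  -- key: for g ∈ A * A⁻¹, the set A ∩ g • A is large
  have key : ∀ g ∈ A * A⁻¹, A.card < 2 * (A ∩ g • A).card := by
    intro g hg
    rw [Finset.mem_mul] at hg
    obtain ⟨a, ha, b', hb', rfl⟩ := hg
    rw [Finset.mem_inv] at hb'
    obtain ⟨b, hb, rfl⟩ := hb'
    have h1 : (b • A) ∪ (a • A) ⊆ A * A := by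
      intro x hx
      rcases Finset.mem_union.1 hx with h | h
      · obtain ⟨y, hy, rfl⟩ := Finset.mem_smul_finset.1 h
        exact Finset.mul_mem_mul hb hy
      · obtain ⟨y, hy, rfl⟩ := Finset.mem_smul_finset.1 h
        exact Finset.mul_mem_mul ha hy
    have h2 : b • (A ∩ (a * b⁻¹) • A) = (b • A) ∩ (a • A) := by
      rw [Finset.smul_finset_inter, smul_smul, mul_comm a b⁻¹, mul_inv_cancel_left]
    have h3 := Finset.card_union_add_card_inter (b • A) (a • A)
    rw [Finset.card_smul_finset, Finset.card_smul_finset] at h3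
    have h4 : ((b • A) ∪ (a • A)).card ≤ (A * A).card := Finset.card_le_card h1
    have h5 : (A ∩ (a * b⁻¹) • A).card = ((b • A) ∩ (a • A)).card := by
      rw [← h2, Finset.card_smul_finset]
    omega
  -- closure under division
  have hdiv : ∀ g ∈ A * A⁻¹, ∀ h ∈ A * A⁻¹, g * h⁻¹ ∈ A * A⁻¹ := by
    intro g hg h hh
    have hSg := key g hg
    have hSh := key h hh
    have hunion : ((A ∩ g • A) ∪ (A ∩ h • A)).card ≤ A.card := by
      apply Finset.card_le_card
      intro x hx
      rcases Finset.mem_union.1 hx with h' | h' <;>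
        exact (Finset.mem_inter.1 h').1
    have hint : ((A ∩ g • A) ∩ (A ∩ h • A)).Nonempty := by
      rw [← Finset.card_pos]
      have := Finset.card_union_add_card_inter (A ∩ g • A) (A ∩ h • A)
      omega
    obtain ⟨y, hy⟩ := hint
    obtain ⟨hy1, hy2⟩ := Finset.mem_inter.1 hy
    obtain ⟨hyA, hyg⟩ := Finset.mem_inter.1 hy1
    obtain ⟨-, hyh⟩ := Finset.mem_inter.1 hy2
    obtain ⟨x, hx, hxy⟩ := Finset.mem_smul_finset.1 hyg
    obtain ⟨z, hz, hzy⟩ := Finset.mem_smul_finset.1 hyh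
    have : g * h⁻¹ = z * x⁻¹ := by
      have hgx : g * x = y := hxy
      have hhz : h * z = y := hzy
      have : g = y * x⁻¹ := by rw [← hgx]; group
      have h2 : h = y * z⁻¹ := by rw [← hhz]; group
      rw [this, h2, mul_inv, inv_inv]
      calc y * x⁻¹ * (y⁻¹ * z) = (y * y⁻¹) * (z * x⁻¹) := by
            rw [mul_assoc, mul_assoc]; congr 1
            rw [← mul_assoc, mul_comm x⁻¹ y⁻¹, mul_assoc, mul_comm x⁻¹ z]
        _ = z * x⁻¹ := by rw [mul_inv_cancel, one_mul]
    rw [this]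
    exact Finset.mem_mul.2 ⟨z, hz, x⁻¹, Finset.inv_mem_inv hx, rfl⟩
  obtain ⟨a, ha⟩ := hA
  have hne : ((A * A⁻¹ : Finset G) : Set G).Nonempty :=
    ⟨a * a⁻¹, by
      exact_mod_cast Finset.mem_mul.2 ⟨a, ha, a⁻¹, Finset.inv_mem_inv ha, rfl⟩⟩
  set H : Subgroup G := Subgroup.ofDiv (↑(A * A⁻¹)) hne
    (by intro x hx y hy; exact_mod_cast hdiv x (by exact_mod_cast hx) y (by exact_mod_cast hy))
    with hH
  have hmemH : ∀ x : G, x ∈ H ↔ x ∈ A * A⁻¹ := fun x => Iff.rfl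
  have hsub : (A : Set G) ⊆ a • (H : Set G) := by
    intro x hx
    refine ⟨a⁻¹ * x, ?_, by simp [smul_eq_mul, mul_inv_cancel_left]⟩
    rw [SetLike.mem_coe, hmemH]
    have : a⁻¹ * x = x * a⁻¹ := mul_comm _ _
    rw [this]
    exact Finset.mem_mul.2 ⟨x, hx, a⁻¹, Finset.inv_mem_inv ha, rfl⟩
  have hHtop : H = ⊤ := by
    by_contra hne'
    exact hcoset ⟨H, hne', a, hsub⟩
  apply Finset.coe_injective
  rw [Finset.coe_univ]
  have : ((A * A⁻¹ : Finset G) : Set G) = (H : Set G) := rfl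
  rw [this, hHtop]
  simp
end

section
/- Let G be a finite abelian group and A ⊆ G a nonempty subset with |A·A| < (3/2)|A|. Then A·A⁻¹ is a subgroup of G. -/
open Pointwise

/-- If `A` is a nonempty subset of a finite abelian group with
`|A·A| < (3/2)|A|`, then `A·A⁻¹` is a subgroup. -/
theorem stmt1 {G : Type*} [CommGroup G] [Fintype G] [DecidableEq G]
    (A : Finset G) (hA : A.Nonempty)
    (hsmall : 2 * (A * A).card < 3 * A.card) :
    ∃ H : Subgroup G, ((A * A⁻¹ : Finset G) : Set G) = (H : Set G) := by
  have key : ∀ a ∈ A, ∀ b ∈ A, A.card < 2 * ((a • A) ∩ (b • A)).card := by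
    intro a ha b hb
    have hsub : (a • A) ∪ (b • A) ⊆ A * A := by
      intro x hx
      rcases Finset.mem_union.1 hx with h | h
      · obtain ⟨y, hy, rfl⟩ := Finset.mem_smul_finset.1 h
        exact Finset.mul_mem_mul ha hy
      · obtain ⟨y, hy, rfl⟩ := Finset.mem_smul_finset.1 h
        exact Finset.mul_mem_mul hb hy
    have h1 : ((a • A) ∪ (b • A)).card + ((a • A) ∩ (b • A)).card
        = (a • A).card + (b • A).card := Finset.card_union_add_card_inter _ _
    have h2 := Finset.card_le_card hsub
    rw [Finset.card_smul_finset, Finset.card_smul_finset] at h1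
    omega
  have key2 : ∀ x ∈ A * A⁻¹, A.card < 2 * ((x • A) ∩ A).card := by
    intro x hx
    obtain ⟨a, ha, b, hb, rfl⟩ := Finset.mem_mul.1 hx
    obtain ⟨c, hc, rfl⟩ := Finset.mem_inv.1 hb
    have hkey := key a ha c hc
    have heq : ((a * c⁻¹) • A) ∩ A = c⁻¹ • ((a • A) ∩ (c • A)) := by
      rw [Finset.smul_finset_inter, smul_smul, smul_smul, inv_mul_cancel, one_smul,
        mul_comm a c⁻¹]
    rw [heq, Finset.card_smul_finset]
    exact hkey
  have hmem : ∀ x ∈ A * A⁻¹, ∀ y ∈ A * A⁻¹, x * y ∈ A * A⁻¹ := by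
    intro x hx y hy
    -- y⁻¹ ∈ A * A⁻¹
    have hyinv : y⁻¹ ∈ A * A⁻¹ := by
      obtain ⟨a, ha, b, hb, rfl⟩ := Finset.mem_mul.1 hy
      obtain ⟨c, hc, rfl⟩ := Finset.mem_inv.1 hb
      rw [mul_inv_rev, inv_inv]
      exact Finset.mul_mem_mul hc (Finset.inv_mem_inv ha)
    have h1 := key2 x hx
    have h2 := key2 y⁻¹ hyinv
    have hsub1 : (x • A) ∩ A ⊆ A := Finset.inter_subset_right
    have hsub2 : (y⁻¹ • A) ∩ A ⊆ A := Finset.inter_subset_right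
    have hU : ((x • A) ∩ A) ∪ ((y⁻¹ • A) ∩ A) ⊆ A := Finset.union_subset hsub1 hsub2
    have hcardU := Finset.card_le_card hU
    have h3 := Finset.card_union_add_card_inter ((x • A) ∩ A) ((y⁻¹ • A) ∩ A)
    have hne : 0 < (((x • A) ∩ A) ∩ ((y⁻¹ • A) ∩ A)).card := by omega
    obtain ⟨c, hc⟩ := Finset.card_pos.1 hne
    simp only [Finset.mem_inter] at hc
    obtain ⟨⟨hc1, -⟩, hc2, -⟩ := hc
    obtain ⟨u, hu, hxu⟩ := Finset.mem_smul_finset.1 hc1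
    obtain ⟨v, hv, hyv⟩ := Finset.mem_smul_finset.1 hc2
    have heq : x * u = y⁻¹ * v := by
      rw [← smul_eq_mul, ← smul_eq_mul, hxu, hyv]
    have hxy : x * y * u = v := by
      rw [mul_comm x y, mul_assoc, heq, ← mul_assoc, mul_inv_cancel, one_mul]
    have : x * y = v * u⁻¹ := eq_mul_inv_iff_mul_eq.mpr hxy
    rw [this]
    exact Finset.mul_mem_mul hv (Finset.inv_mem_inv hu)
  obtain ⟨a, ha⟩ := hA
  refine ⟨{ carrier := ↑(A * A⁻¹)
            one_mem' := by
              have : (1 : G) = a * a⁻¹ := by group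
              rw [this]
              exact_mod_cast Finset.mul_mem_mul ha (Finset.inv_mem_inv ha)
            mul_mem' := fun hx hy => by exact_mod_cast hmem _ (by exact_mod_cast hx) _ (by exact_mod_cast hy)
            inv_mem' := fun {x} hx => by
              obtain ⟨a, ha', b, hb, rfl⟩ := Finset.mem_mul.1 (by exact_mod_cast hx)
              obtain ⟨c, hc, rfl⟩ := Finset.mem_inv.1 hb
              have : (a * c⁻¹)⁻¹ = c * a⁻¹ := by group
              rw [this]
              exact_mod_cast Finset.mul_mem_mul hc (Finset.inv_mem_inv ha') }, rfl⟩
end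

section
/- Let G be a finite abelian group and A ⊆ G a nonempty subset satisfying (2/3)²|G| ≤ |A| ≤ (1/2)|G| and A·A⁻¹ = G. Then |A·A| ≥ √2 · |A|, and consequently |A·A| > |G|/2, hence A⁽⁴⁾ = G. -/
open Pointwise

/-- If `(2/3)²|G| ≤ |A| ≤ |G|/2` and `A·A⁻¹ = G`, then
`|A·A| ≥ √2·|A|`, consequently `|A·A| > |G|/2`, hence `A⁽⁴⁾ = G`. -/
theorem stmt4 {G : Type*} [CommGroup G] [Fintype G] [DecidableEq G]
    (A : Finset G) (hA : A.Nonempty)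
    (hlow : (4 : ℝ) / 9 * Fintype.card G ≤ A.card)
    (hhigh : (A.card : ℝ) ≤ (Fintype.card G : ℝ) / 2)
    (hAA : A * A⁻¹ = Finset.univ) :
    Real.sqrt 2 * A.card ≤ ((A * A).card : ℝ) ∧
    (Fintype.card G : ℝ) / 2 < ((A * A).card : ℝ) ∧
    A ^ 4 = Finset.univ := by
  have hr := Finset.ruzsa_triangle_inequality_mulInv_mul_mul A A A
  rw [hAA, Finset.card_univ] at hr
  have hrR : (Fintype.card G : ℝ) * A.card ≤ ((A * A).card : ℝ) * ((A * A).card : ℝ) := by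
    exact_mod_cast hr
  set a : ℝ := (A.card : ℝ) with ha
  set s : ℝ := ((A * A).card : ℝ) with hs
  set n : ℝ := (Fintype.card G : ℝ) with hn
  have ha0 : 0 ≤ a := Nat.cast_nonneg _
  have hs0 : 0 ≤ s := Nat.cast_nonneg _
  have h2a : 2 * a ^ 2 ≤ s ^ 2 := by nlinarith
  have h1 : Real.sqrt 2 * a ≤ s := by
    have := Real.sqrt_le_sqrt h2a
    rw [show (2 : ℝ) * a ^ 2 = (Real.sqrt 2 * a) ^ 2 by
      rw [mul_pow, Real.sq_sqrt (by norm_num)], Real.sqrt_sq (by positivity),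
      Real.sqrt_sq hs0] at this
    exact this
  have hsqrt2 : (9 : ℝ) / 8 < Real.sqrt 2 := by
    nlinarith [Real.sq_sqrt (show (0:ℝ) ≤ 2 by norm_num),
      Real.sqrt_nonneg (2 : ℝ)]
  have hn0 : 0 < n := by
    have := Fintype.card_pos (α := G)
    positivity
  have h2 : n / 2 < s := by nlinarith
  refine ⟨h1, h2, ?_⟩
  have hcard : Fintype.card G < (A * A).card + (A * A).card := by
    have : (Fintype.card G : ℝ) < ((A * A).card : ℝ) + ((A * A).card : ℝ) := by
      rw [← hs, ← hn]; linarith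
    exact_mod_cast this
  have hS : (A * A) * (A * A) = Finset.univ := by
    apply Finset.eq_univ_iff_forall.2
    intro g
    have hsub1 : A * A ⊆ Finset.univ := Finset.subset_univ _
    have hsub2 : g • (A * A)⁻¹ ⊆ Finset.univ := Finset.subset_univ _
    have hlt : (Finset.univ : Finset G).card < (A * A).card + (g • (A * A)⁻¹).card := by
      rwa [Finset.card_univ, Finset.card_smul_finset, Finset.card_inv]
    obtain ⟨x, hx⟩ := Finset.inter_nonempty_of_card_lt_card_add_card hsub1 hsub2 hlt
    rw [Finset.mem_inter] at hx
    obtain ⟨hx1, hx2⟩ := hx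
    rw [Finset.mem_smul_finset] at hx2
    obtain ⟨y, hy, hxy⟩ := hx2
    rw [Finset.mem_inv] at hy
    obtain ⟨z, hz, hzy⟩ := hy
    have hxz : x * z = g := by rw [← hxy, ← hzy, smul_eq_mul]; group
    rw [← hxz]
    exact Finset.mul_mem_mul hx1 hz
  rw [show (4 : ℕ) = 2 + 2 by norm_num, pow_add, sq] at *
  exact hS
end

section
/- Let G be a finite abelian group, A ⊆ G nonempty, not contained in any coset of a proper subgroup, and with |A| ≥ c|G| for some constant c > 0. Then there exists k depending only on c (one may take k with (3/2)^{k-1} c > 1/2, times an extra factor for the final doubling) such that A⁽ᵏ⁾ = G. -/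
open Pointwise Finset

section Aux

variable {G : Type} [CommGroup G] [Fintype G] [DecidableEq G]

private lemma comm_id (a₁ a₂ a₃ a₄ w s t : G) (h1 : a₁⁻¹ * (a₂ * s) = w)
    (h2 : a₄⁻¹ * (a₃ * t) = w) : a₁ / a₂ * (a₃ / a₄) = s / t := by
  have hs : s = (a₂⁻¹ * a₁) * w := by rw [← h1]; group
  have ht : t = (a₃⁻¹ * a₄) * w := by rw [← h2]; group
  subst hs ht
  rw [mul_div_mul_right_eq_div]
  simp only [div_eq_mul_inv, mul_inv_rev, inv_inv]
  simp [mul_comm, mul_left_comm, mul_assoc]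

/-- Pigeonhole: a set of more than half the group squares to everything. -/
private lemma big_sq (S : Finset G) (h : Fintype.card G < S.card + S.card) :
    S * S = Finset.univ := by
  apply Finset.eq_univ_iff_forall.2
  intro g
  have hne : (S ∩ (g • S⁻¹)).Nonempty := by
    rw [← Finset.card_pos]
    have hcard : (g • S⁻¹).card = S.card := by
      rw [Finset.card_smul_finset, Finset.card_inv]
    have hun : (S ∪ g • S⁻¹).card ≤ Fintype.card G := by
      simpa using Finset.card_le_univ (S ∪ g • S⁻¹)
    have := Finset.card_inter_add_card_union S (g • S⁻¹)
    omega
  obtain ⟨x, hx⟩ := hne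
  rw [Finset.mem_inter] at hx
  obtain ⟨y, hy, hxy⟩ := Finset.mem_smul_finset.1 hx.2
  rw [Finset.mem_inv] at hy
  obtain ⟨s, hs, rfl⟩ := hy
  refine Finset.mem_mul.2 ⟨x, hx.1, s, hs, ?_⟩
  have : g * s⁻¹ = x := hxy
  rw [← this]; group

/-- Freiman dichotomy: either `B*B` is 3/2-large, or `B/B = G`. -/
private lemma dichotomy (B : Finset G) (hB : B.Nonempty)
    (hcos : ¬ ∃ (H : Subgroup G), H ≠ ⊤ ∧ ∃ x : G, (B : Set G) ⊆ x • (H : Set G)) :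
    3 * B.card ≤ 2 * (B * B).card ∨ (B / B : Finset G) = Finset.univ := by
  by_cases h : 3 * B.card ≤ 2 * (B * B).card
  · exact Or.inl h
  push_neg at h
  right
  -- closure of B/B under multiplication
  have hmul : ∀ x ∈ B / B, ∀ y ∈ B / B, x * y ∈ B / B := by
    intro x hx y hy
    obtain ⟨a₁, ha₁, a₂, ha₂, rfl⟩ := Finset.mem_div.1 hx
    obtain ⟨a₃, ha₃, a₄, ha₄, rfl⟩ := Finset.mem_div.1 hy
    -- the translated intersections
    set X : Finset G := a₁⁻¹ • (a₁ • B ∩ a₂ • B) with hX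
    set Y : Finset G := a₄⁻¹ • (a₄ • B ∩ a₃ • B) with hY
    have hsubmul : ∀ a ∈ B, a • B ⊆ B * B := by
      intro a ha
      rw [← Finset.singleton_mul]
      exact Finset.mul_subset_mul_right (Finset.singleton_subset_iff.2 ha)
    have cardXY : ∀ (a b : G), a ∈ B → b ∈ B →
        2 * B.card ≤ (a⁻¹ • (a • B ∩ b • B)).card + (B * B).card := by
      intro a b ha hb
      have h1 : (a • B ∪ b • B).card ≤ (B * B).card :=
        Finset.card_le_card (Finset.union_subset (hsubmul a ha) (hsubmul b hb))
      have h2 := Finset.card_inter_add_card_union (a • B) (b • B)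
      have h3 : (a • B).card = B.card := Finset.card_smul_finset _ _
      have h4 : (b • B).card = B.card := Finset.card_smul_finset _ _
      have h5 : (a⁻¹ • (a • B ∩ b • B)).card = (a • B ∩ b • B).card :=
        Finset.card_smul_finset _ _
      omega
    have hXB : X ⊆ B := by
      have : X ⊆ a₁⁻¹ • (a₁ • B) :=
        Finset.smul_finset_subset_smul_finset Finset.inter_subset_left
      simpa [inv_smul_smul] using this
    have hYB : Y ⊆ B := by
      have : Y ⊆ a₄⁻¹ • (a₄ • B) :=
        Finset.smul_finset_subset_smul_finset Finset.inter_subset_left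
      simpa [inv_smul_smul] using this
    have hXY : (X ∩ Y).Nonempty := by
      rw [← Finset.card_pos]
      have c1 : 2 * B.card ≤ X.card + (B * B).card := by
        rw [hX]; exact cardXY a₁ a₂ ha₁ ha₂
      have c2 : 2 * B.card ≤ Y.card + (B * B).card := by
        rw [hY]; exact cardXY a₄ a₃ ha₄ ha₃
      have c3 : (X ∪ Y).card ≤ B.card :=
        Finset.card_le_card (Finset.union_subset hXB hYB)
      have c4 := Finset.card_inter_add_card_union X Y
      omega
    obtain ⟨w, hw⟩ := hXY
    rw [Finset.mem_inter] at hw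
    obtain ⟨u, hu, huw⟩ := Finset.mem_smul_finset.1 hw.1
    obtain ⟨v, hv, hvw⟩ := Finset.mem_smul_finset.1 hw.2
    rw [Finset.mem_inter] at hu hv
    obtain ⟨s, hs, hsu⟩ := Finset.mem_smul_finset.1 hu.2
    obtain ⟨t, ht, htv⟩ := Finset.mem_smul_finset.1 hv.2
    have e1 : a₁⁻¹ * (a₂ * s) = w := by rw [← huw, ← hsu]; rfl
    have e2 : a₄⁻¹ * (a₃ * t) = w := by rw [← hvw, ← htv]; rfl
    exact Finset.mem_div.2 ⟨s, hs, t, ht, (comm_id a₁ a₂ a₃ a₄ w s t e1 e2).symm⟩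
  -- build the subgroup
  obtain ⟨b, hb⟩ := hB
  let H : Subgroup G :=
    { carrier := (↑(B / B) : Set G)
      mul_mem' := fun hx hy => hmul _ hx _ hy
      one_mem' :=
        Finset.mem_coe.2 (Finset.mem_div.2 ⟨b, hb, b, hb, div_self' b⟩)
      inv_mem' := by
        intro x hx
        obtain ⟨a₁, ha₁, a₂, ha₂, rfl⟩ := Finset.mem_div.1 hx
        exact Finset.mem_coe.2 (Finset.mem_div.2 ⟨a₂, ha₂, a₁, ha₁, (inv_div a₁ a₂).symm⟩) }
  have hHtop : H = ⊤ := by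
    by_contra hne
    refine hcos ⟨H, hne, b, ?_⟩
    intro x hx
    refine ⟨x / b, ?_, by simp⟩
    exact Finset.mem_coe.2 (Finset.mem_div.2 ⟨x, hx, b, hb, rfl⟩)
  apply Finset.eq_univ_iff_forall.2
  intro g
  have : g ∈ H := hHtop ▸ Subgroup.mem_top g
  exact Finset.mem_coe.1 this

/-- The no-coset condition passes to powers. -/
private lemma nocoset_pow (A : Finset G) (hA : A.Nonempty)
    (hcos : ¬ ∃ (H : Subgroup G), H ≠ ⊤ ∧ ∃ x : G, (A : Set G) ⊆ x • (H : Set G))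
    (m : ℕ) (hm : 1 ≤ m) :
    ¬ ∃ (H : Subgroup G), H ≠ ⊤ ∧ ∃ x : G, ((A ^ m : Finset G) : Set G) ⊆ x • (H : Set G) := by
  rintro ⟨H, hne, x, hsub⟩
  obtain ⟨a, ha⟩ := hA
  refine hcos ⟨H, hne, x * (a ^ (m - 1))⁻¹, ?_⟩
  intro b hb
  have hbmem : (b : G) * a ^ (m - 1) ∈ (A ^ m : Finset G) := by
    have : A ^ m = A * A ^ (m - 1) := by
      rw [← pow_succ']
      congr 1
      omega
    rw [this]
    exact Finset.mul_mem_mul hb (Finset.pow_mem_pow ha)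
  obtain ⟨h, hh, hhx⟩ := hsub (Finset.mem_coe.2 hbmem)
  refine ⟨h, hh, ?_⟩
  have : x * h = b * a ^ (m - 1) := hhx
  simp only [smul_eq_mul]
  rw [mul_assoc, mul_comm (a ^ (m-1))⁻¹ h, ← mul_assoc, this]
  group

private lemma density_step (c : ℝ) (hc : 0 < c) (n : ℕ) :
    min ((3/2 : ℝ) ^ (n+1) * c) (2/3) ≤ 3/2 * min ((3/2 : ℝ) ^ n * c) (2/3) ∧
    (min ((3/2 : ℝ) ^ (n+1) * c) (2/3)) ^ 2 ≤ min ((3/2 : ℝ) ^ n * c) (2/3) := by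
  set a : ℝ := (3/2 : ℝ) ^ n * c with ha
  have hapos : 0 < a := by positivity
  have hsucc : (3/2 : ℝ) ^ (n+1) * c = 3/2 * a := by rw [pow_succ]; ring
  rw [hsucc]
  rcases le_total a (4/9) with h | h
  · have h1 : min a (2/3 : ℝ) = a := min_eq_left (by linarith)
    constructor
    · rw [h1]
      exact min_le_left _ _
    · have h2 : min (3/2 * a) (2/3 : ℝ) ≤ 3/2 * a := min_le_left _ _
      have h3 : (0:ℝ) ≤ min (3/2 * a) (2/3 : ℝ) := le_min (by linarith) (by norm_num)
      rw [h1]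
      nlinarith
  · have h1 : (4/9 : ℝ) ≤ min a (2/3) := le_min h (by norm_num)
    have h2 : min (3/2 * a) (2/3 : ℝ) ≤ 2/3 := min_le_right _ _
    have h3 : (0:ℝ) ≤ min (3/2 * a) (2/3 : ℝ) := le_min (by linarith) (by norm_num)
    constructor
    · calc min (3/2 * a) (2/3:ℝ) ≤ 2/3 := h2
        _ ≤ 3/2 * min a (2/3) := by linarith
    · nlinarith

end Aux

/-- (Schnirelmann-type iteration) For every `c > 0` there is a `k`
depending only on `c` so that any nonempty subset `A` of a finite abelian group `G`,
not contained in any coset of a proper subgroup and of density at least `c`,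
satisfies `A⁽ᵏ⁾ = G`. -/
theorem stmt6 (c : ℝ) (hc : 0 < c) :
    ∃ k : ℕ, 1 ≤ k ∧
      ∀ (G : Type) (_ : CommGroup G) (_ : Fintype G) (_ : DecidableEq G)
        (A : Finset G), A.Nonempty →
        (¬ ∃ (H : Subgroup G), H ≠ ⊤ ∧ ∃ x : G, (A : Set G) ⊆ x • (H : Set G)) →
        c * Fintype.card G ≤ A.card →
        A ^ k = Finset.univ := by
  obtain ⟨N, hN⟩ := pow_unbounded_of_one_lt (R := ℝ) (2 / (3 * c)) (by norm_num : (1:ℝ) < 3/2)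
  refine ⟨2 ^ (N + 1), Nat.one_le_two_pow, ?_⟩
  intro G instG instF instD A hA hcos hcard
  have hGpos : 0 < Fintype.card G := Fintype.card_pos
  -- density induction
  have main : ∀ n : ℕ, min ((3/2 : ℝ) ^ n * c) (2/3) * (Fintype.card G : ℝ)
      ≤ ((A ^ (2 ^ n) : Finset G).card : ℝ) := by
    intro n
    induction n with
    | zero =>
      simp only [pow_zero, pow_one]
      calc min ((3/2:ℝ)^0 * c) (2/3) * (Fintype.card G : ℝ)
          ≤ c * (Fintype.card G : ℝ) := by
            apply mul_le_mul_of_nonneg_right _ (by positivity)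
            simpa using min_le_left ((3/2:ℝ)^0 * c) (2/3)
        _ ≤ (A.card : ℝ) := hcard
    | succ n ih =>
      set B : Finset G := A ^ (2 ^ n) with hB
      have hBne : B.Nonempty := hA.pow
      have hBcos := nocoset_pow A hA hcos (2 ^ n) Nat.one_le_two_pow
      have hpow : A ^ (2 ^ (n+1)) = B * B := by
        rw [hB, ← pow_add]
        congr 1
        rw [pow_succ]
        omega
      have hstep := density_step c hc n
      set m : ℝ := min ((3/2 : ℝ) ^ n * c) (2/3) with hm
      set m' : ℝ := min ((3/2 : ℝ) ^ (n+1) * c) (2/3) with hm'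
      have hm'nn : 0 ≤ m' := le_min (by positivity) (by norm_num)
      rcases dichotomy B hBne hBcos with h | h
      · -- 3/2 growth
        have h' : (3:ℝ) * B.card ≤ 2 * ((B * B).card : ℝ) := by exact_mod_cast h
        rw [hpow]
        calc m' * (Fintype.card G : ℝ) ≤ 3/2 * m * (Fintype.card G : ℝ) := by
              apply mul_le_mul_of_nonneg_right hstep.1 (by positivity)
          _ ≤ 3/2 * (B.card : ℝ) := by
              have := mul_le_mul_of_nonneg_left ih (by norm_num : (0:ℝ) ≤ 3/2)
              linarith
          _ ≤ ((B * B).card : ℝ) := by linarith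
      · -- B/B = G, use Ruzsa
        have hruzsa := Finset.ruzsa_triangle_inequality_div_mul_mul B B B
        rw [h, Finset.card_univ] at hruzsa
        have hruzsa' : (Fintype.card G : ℝ) * (B.card : ℝ)
            ≤ ((B * B).card : ℝ) * ((B * B).card : ℝ) := by exact_mod_cast hruzsa
        rw [hpow]
        have hsq : (m' * (Fintype.card G : ℝ)) ^ 2 ≤ (((B * B).card : ℝ)) ^ 2 := by
          calc (m' * (Fintype.card G : ℝ)) ^ 2
              = m' ^ 2 * (Fintype.card G : ℝ) ^ 2 := by ring
            _ ≤ m * (Fintype.card G : ℝ) ^ 2 :=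
                mul_le_mul_of_nonneg_right hstep.2 (by positivity)
            _ = (m * (Fintype.card G : ℝ)) * (Fintype.card G : ℝ) := by ring
            _ ≤ ((B.card : ℝ)) * (Fintype.card G : ℝ) :=
                mul_le_mul_of_nonneg_right ih (by positivity)
            _ = (Fintype.card G : ℝ) * (B.card : ℝ) := by ring
            _ ≤ ((B * B).card : ℝ) * ((B * B).card : ℝ) := hruzsa'
            _ = (((B * B).card : ℝ)) ^ 2 := by ring
        exact le_of_pow_le_pow_left₀ two_ne_zero (by positivity) hsq
  -- finish
  have hmN : min ((3/2 : ℝ) ^ N * c) (2/3) = 2/3 := by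
    apply min_eq_right
    rw [div_lt_iff₀ (by positivity : (0:ℝ) < 3 * c)] at hN
    nlinarith
  have hbig := main N
  rw [hmN] at hbig
  set B : Finset G := A ^ (2 ^ N) with hB
  have hcard2 : Fintype.card G < B.card + B.card := by
    have : (Fintype.card G : ℝ) < (B.card : ℝ) + (B.card : ℝ) := by
      have : (0:ℝ) < (Fintype.card G : ℝ) := by exact_mod_cast hGpos
      nlinarith
    exact_mod_cast this
  have : A ^ (2 ^ (N+1)) = B * B := by
    rw [hB, ← pow_add]
    congr 1
    rw [pow_succ]
    omega
  rw [this]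
  exact big_sq B hcard2
end

section
/- Let q be prime, x < q, and w : ℕ → ℝ supported on [1, x] of the form w(n) = Σ_{d|n} λ_d where λ_d = 0 for d > D, λ_d = 0 unless d is squarefree, and |λ_d| ≤ 3^{ν(d)} (with ν(d) the number of distinct prime factors of d). Then Σ_{r=1}^{q-1} |ŵ(r)| ≪ q · D^{1+o(1)} · log q as q → ∞, where ŵ(r) = Σ_{n} w(n) e(−rn/q) is the additive Fourier transform mod q. -/
open scoped BigOperators

open Finset Real

lemma one_div_sin_bound (q b : ℕ) (hb1 : 1 ≤ b) (hbq : b < q) :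
    1 / Real.sin (π * b / q) ≤ (q:ℝ)/(2*b) + (q:ℝ)/(2*((q:ℝ)-b)) := by
  have hqn : 0 < q := by omega
  have hq0 : (0:ℝ) < q := by exact_mod_cast hqn
  have hb0 : (0:ℝ) < b := by exact_mod_cast hb1
  have hbq' : (b:ℝ) < q := by exact_mod_cast hbq
  have hqb0 : (0:ℝ) < (q:ℝ) - b := by linarith
  set s : ℝ := Real.sin (π * b / q) with hs
  have hspos : 0 < s := by
    apply Real.sin_pos_of_pos_of_lt_pi
    · positivity
    · rw [div_lt_iff₀ hq0]; nlinarith [Real.pi_pos]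
  rcases le_or_gt (2*b) q with h | h
  · have h2b : (2:ℝ)*b ≤ q := by exact_mod_cast h
    have harg : π * b / q ≤ π / 2 := by
      rw [div_le_div_iff₀ hq0 (by norm_num : (0:ℝ) < 2)]; nlinarith [Real.pi_pos]
    have hj := Real.mul_le_sin (x := π * b / q) (by positivity) harg
    have hs2 : 2 * (b:ℝ) / q ≤ s := by
      have : 2/π * (π * b / q) = 2 * (b:ℝ)/q := by field_simp
      rw [hs]; linarith [this ▸ hj]
    have h1 : 1/s ≤ q/(2*b) := by
      rw [div_le_div_iff₀ hspos (by positivity)]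
      have hqq : (q:ℝ) * (2*b/q) = 2*b := by field_simp
      nlinarith [mul_le_mul_of_nonneg_left hs2 hq0.le]
    have : (0:ℝ) ≤ (q:ℝ)/(2*((q:ℝ)-b)) := by positivity
    linarith
  · have h2b : (q:ℝ) < 2*b := by exact_mod_cast h
    have hsrw : s = Real.sin (π * ((q:ℝ)-b) / q) := by
      rw [hs, ← Real.sin_pi_sub]; congr 1; field_simp
    have harg : π * ((q:ℝ)-b) / q ≤ π / 2 := by
      rw [div_le_div_iff₀ hq0 (by norm_num : (0:ℝ) < 2)]; nlinarith [Real.pi_pos]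
    have hj := Real.mul_le_sin (x := π * ((q:ℝ)-b) / q) (by positivity) harg
    have hs2 : 2 * ((q:ℝ)-b) / q ≤ s := by
      have : 2/π * (π * ((q:ℝ)-b) / q) = 2 * ((q:ℝ)-b)/q := by field_simp
      rw [hsrw]; linarith [this ▸ hj]
    have h1 : 1/s ≤ q/(2*((q:ℝ)-b)) := by
      rw [div_le_div_iff₀ hspos (by positivity)]
      have hqq : (q:ℝ) * (2*((q:ℝ)-b)/q) = 2*((q:ℝ)-b) := by field_simp
      nlinarith [mul_le_mul_of_nonneg_left hs2 hq0.le]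
    have : (0:ℝ) ≤ (q:ℝ)/(2*b) := by positivity
    linarith

lemma geom_bound (q b M : ℕ) (hb1 : 1 ≤ b) (hbq : b < q) :
    ‖∑ m ∈ Finset.Icc 1 M, Complex.exp ((-(2*π*b/q) : ℝ) * Complex.I) ^ m‖ ≤
      (q:ℝ)/(2*b) + (q:ℝ)/(2*((q:ℝ)-b)) := by
  have hqn : 0 < q := by omega
  have hq0 : (0:ℝ) < q := by exact_mod_cast hqn
  have hb0 : (0:ℝ) < b := by exact_mod_cast hb1
  have hbq' : (b:ℝ) < q := by exact_mod_cast hbq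
  set z : ℂ := Complex.exp ((-(2*π*b/q) : ℝ) * Complex.I) with hz
  set s : ℝ := Real.sin (π * b / q) with hs
  have hspos : 0 < s := by
    apply Real.sin_pos_of_pos_of_lt_pi
    · positivity
    · rw [div_lt_iff₀ hq0]; nlinarith [Real.pi_pos]
  have habs : ‖z‖ = 1 := Complex.norm_exp_ofReal_mul_I _
  have hre : z.re = Real.cos (-(2*π*b/q)) := Complex.exp_ofReal_mul_I_re _
  have him : z.im = Real.sin (-(2*π*b/q)) := Complex.exp_ofReal_mul_I_im _
  have hz1 : ‖z - 1‖ = 2 * s := by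
    have h2 : (‖z - 1‖)^2 = (Real.cos (-(2*π*b/q)) - 1)^2 + (Real.sin (-(2*π*b/q)))^2 := by
      rw [Complex.sq_norm, Complex.normSq_apply, Complex.sub_re, Complex.sub_im,
        Complex.one_re, Complex.one_im, hre, him]
      ring
    have hsin2 := Real.sin_sq_eq_half_sub (-(π*b/q))
    have e1 : Real.sin (-(π*b/q)) ^ 2 = s ^ 2 := by rw [Real.sin_neg]; ring
    have e2 : Real.cos (2 * -(π*b/q)) = Real.cos (-(2*π*b/q)) := by ring_nf
    have h4 : (‖z - 1‖)^2 = (2*s)^2 := by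
      rw [h2]
      rw [e1, e2] at hsin2
      nlinarith [Real.sin_sq_add_cos_sq (-(2*π*b/q))]
    nlinarith [norm_nonneg (z - 1), hspos]
  have hzne : z ≠ 1 := by
    intro h; rw [h] at hz1; simp at hz1; nlinarith
  have hM : ∑ m ∈ Finset.Icc 1 M, z ^ m = (z ^ (M+1) - z ^ 1) / (z - 1) := by
    rw [← Finset.Ico_add_one_right_eq_Icc]
    exact geom_sum_Ico hzne (by omega)
  have hbound : ‖∑ m ∈ Finset.Icc 1 M, z ^ m‖ ≤ 1 / s := by
    rw [hM, norm_div, hz1]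
    have h1 : ‖z ^ (M+1) - z ^ 1‖ ≤ 2 := by
      calc ‖z ^ (M+1) - z ^ 1‖ ≤ ‖z^(M+1)‖ + ‖z^1‖ :=
            norm_sub_le _ _
        _ = 2 := by simp [norm_pow, habs]; norm_num
    calc ‖z ^ (M+1) - z ^ 1‖ / (2*s) ≤ 2 / (2*s) := by gcongr
      _ = 1 / s := by rw [div_eq_div_iff (by positivity) (by positivity)]; ring
  exact hbound.trans (one_div_sin_bound q b hb1 hbq)

lemma mul_mod_bij (q d : ℕ) (hq : q.Prime) (hd : ¬ q ∣ d) (F : ℕ → ℝ) :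
    ∑ r ∈ Finset.Icc 1 (q-1), F ((r*d) % q) = ∑ b ∈ Finset.Icc 1 (q-1), F b := by
  haveI : Fact q.Prime := ⟨hq⟩
  have hq2 : 2 ≤ q := hq.two_le
  set e : ℕ := ((d : ZMod q)⁻¹).val with he
  have hdz : (d : ZMod q) ≠ 0 := by
    rwa [Ne, ZMod.natCast_eq_zero_iff]
  have hde : d * e ≡ 1 [MOD q] := by
    rw [← ZMod.natCast_eq_natCast_iff]
    push_cast
    rw [ZMod.natCast_val, ZMod.cast_id]
    field_simp
  -- membership helper
  have mem_of : ∀ a : ℕ, ¬ q ∣ a → a % q ∈ Finset.Icc 1 (q-1) := by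
    intro a ha
    simp only [Finset.mem_Icc]
    constructor
    · rcases Nat.eq_zero_or_pos (a % q) with h | h
      · exact absurd (Nat.dvd_iff_mod_eq_zero.2 h) ha
      · omega
    · have := Nat.mod_lt a (show 0 < q by omega); omega
  have hqe : ¬ q ∣ e := by
    intro hqe
    have : d * e ≡ 0 [MOD q] := (Nat.modEq_zero_iff_dvd.2 hqe).mul_left d
    have h1 : 1 ≡ 0 [MOD q] := hde.symm.trans this
    have h3 := (Nat.modEq_zero_iff_dvd).1 h1
    have := Nat.le_of_dvd one_pos h3
    omega
  apply Finset.sum_nbij' (i := fun r => (r*d) % q) (j := fun b => (b*e) % q)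
  · intro r hr
    simp only [Finset.mem_Icc] at hr
    apply mem_of
    intro hdvd
    rcases (Nat.Prime.dvd_mul hq).1 hdvd with h | h
    · exact absurd (Nat.le_of_dvd (by omega) h) (by omega)
    · exact hd h
  · intro b hb
    simp only [Finset.mem_Icc] at hb
    apply mem_of
    intro hdvd
    rcases (Nat.Prime.dvd_mul hq).1 hdvd with h | h
    · exact absurd (Nat.le_of_dvd (by omega) h) (by omega)
    · exact hqe h
  · intro r hr
    simp only [Finset.mem_Icc] at hr
    have : (r * d % q) * e % q = r * (d * e) % q := by
      rw [Nat.mod_mul_mod, mul_assoc]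
    rw [this]
    have h2 : r * (d * e) ≡ r * 1 [MOD q] := hde.mul_left r
    have : r * (d*e) % q = r % q := by simpa [Nat.ModEq] using h2
    rw [this, Nat.mod_eq_of_lt (by omega)]
  · intro b hb
    simp only [Finset.mem_Icc] at hb
    have : (b * e % q) * d % q = b * (d * e) % q := by
      rw [Nat.mod_mul_mod, mul_assoc, mul_comm e d]
    rw [this]
    have h2 : b * (d * e) ≡ b * 1 [MOD q] := hde.mul_left b
    have : b * (d*e) % q = b % q := by simpa [Nat.ModEq] using h2
    rw [this, Nat.mod_eq_of_lt (by omega)]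
  · intro r hr; rfl

lemma reflect_sum (q : ℕ) (G : ℝ → ℝ) :
    ∑ b ∈ Finset.Icc 1 (q-1), G ((q:ℝ) - b) = ∑ b ∈ Finset.Icc 1 (q-1), G b := by
  apply Finset.sum_nbij' (i := fun b => q - b) (j := fun b => q - b)
  · intro b hb; simp only [Finset.mem_Icc] at *; omega
  · intro b hb; simp only [Finset.mem_Icc] at *; omega
  · intro b hb; simp only [Finset.mem_Icc] at hb; omega
  · intro b hb; simp only [Finset.mem_Icc] at hb; omega
  · intro b hb; simp only [Finset.mem_Icc] at hb
    congr 1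
    have : ((q - b : ℕ) : ℝ) = (q:ℝ) - b := by
      have : b ≤ q := by omega
      push_cast [this]; ring
    rw [this]

lemma harm_sum (n : ℕ) (hn : 1 ≤ n) :
    ∑ b ∈ Finset.Icc 1 n, (1:ℝ)/b ≤ 1 + Real.log n := by
  have h := harmonic_le_one_add_log n
  rw [harmonic_eq_sum_Icc] at h
  have : ((∑ i ∈ Finset.Icc 1 n, (i:ℚ)⁻¹ : ℚ) : ℝ) = ∑ b ∈ Finset.Icc 1 n, (1:ℝ)/b := by
    push_cast
    exact Finset.sum_congr rfl fun i _ => (one_div _).symm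
  rwa [this] at h

lemma swap_div (x : ℕ) (f : ℕ → ℕ → ℂ) :
    ∑ n ∈ Finset.Icc 1 x, ∑ d ∈ n.divisors, f d n
      = ∑ d ∈ Finset.Icc 1 x, ∑ m ∈ Finset.Icc 1 (x / d), f d (d * m) := by
  have step1 : ∑ n ∈ Finset.Icc 1 x, ∑ d ∈ n.divisors, f d n
      = ∑ n ∈ Finset.Icc 1 x, ∑ d ∈ (Finset.Icc 1 x).filter (· ∣ n), f d n := by
    apply Finset.sum_congr rfl
    intro n hn
    simp only [Finset.mem_Icc] at hn
    apply Finset.sum_congr _ fun _ _ => rfl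
    ext d
    simp only [Nat.mem_divisors, Finset.mem_filter, Finset.mem_Icc]
    constructor
    · rintro ⟨hdvd, hne⟩
      exact ⟨⟨Nat.one_le_iff_ne_zero.2 (by rintro rfl; simp at hdvd; omega),
        le_trans (Nat.le_of_dvd (by omega) hdvd) hn.2⟩, hdvd⟩
    · rintro ⟨_, hdvd⟩; exact ⟨hdvd, by omega⟩
  rw [step1]
  rw [Finset.sum_comm' (s := Finset.Icc 1 x) (t := fun n => (Finset.Icc 1 x).filter (· ∣ n))
    (t' := Finset.Icc 1 x) (s' := fun d => (Finset.Icc 1 x).filter (fun n => d ∣ n))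
    (h := by intro d n; simp only [Finset.mem_filter]; tauto)]
  apply Finset.sum_congr rfl
  intro d hd
  simp only [Finset.mem_Icc] at hd
  apply Finset.sum_nbij' (i := fun n => n / d) (j := fun m => d * m)
  · intro n hn
    simp only [Finset.mem_filter, Finset.mem_Icc] at hn ⊢
    obtain ⟨⟨hn1, hnx⟩, hdvd⟩ := hn
    constructor
    · exact (Nat.one_le_div_iff (by omega)).2 (Nat.le_of_dvd (by omega) hdvd)
    · exact Nat.div_le_div_right hnx
  · intro m hm
    simp only [Finset.mem_filter, Finset.mem_Icc] at hm ⊢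
    obtain ⟨hm1, hmx⟩ := hm
    refine ⟨⟨Nat.one_le_iff_ne_zero.2 (Nat.mul_ne_zero (by omega) (by omega)), ?_⟩, Dvd.intro m rfl⟩
    calc d * m ≤ d * (x / d) := Nat.mul_le_mul_left d hmx
      _ ≤ x := Nat.mul_div_le x d
  · intro n hn
    simp only [Finset.mem_filter, Finset.mem_Icc] at hn
    exact Nat.mul_div_cancel' hn.2
  · intro m hm
    exact Nat.mul_div_cancel_left m (by omega)
  · intro n hn
    simp only [Finset.mem_filter, Finset.mem_Icc] at hn
    rw [Nat.mul_div_cancel' hn.2]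

lemma nu_bound (ε : ℝ) (hε : 0 < ε) :
    ∃ A : ℝ, 0 < A ∧ ∀ d : ℕ, 1 ≤ d → (3:ℝ) ^ d.primeFactors.card ≤ A * (d:ℝ) ^ ε := by
  set P : ℕ := max 2 ⌈(3:ℝ) ^ (1/ε)⌉₊ with hP
  refine ⟨3 ^ P, by positivity, ?_⟩
  intro d hd
  have hd0 : (0:ℝ) < d := by exact_mod_cast hd
  have hP0 : 0 < P := lt_of_lt_of_le two_pos (le_max_left _ _)
  have hP3 : (3:ℝ) ≤ (P:ℝ) ^ ε := by
    have h1 : (3:ℝ) ^ (1/ε) ≤ (P:ℝ) := by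
      calc (3:ℝ) ^ (1/ε) ≤ (⌈(3:ℝ) ^ (1/ε)⌉₊ : ℝ) := Nat.le_ceil _
        _ ≤ (P:ℝ) := Nat.cast_le.2 (le_max_right _ _)
    calc (3:ℝ) = ((3:ℝ) ^ (1/ε)) ^ ε := by
          rw [← Real.rpow_mul (by norm_num), one_div_mul_cancel hε.ne', Real.rpow_one]
      _ ≤ (P:ℝ) ^ ε := Real.rpow_le_rpow (by positivity) h1 hε.le
  set S := d.primeFactors with hS
  set T := S.filter (fun p => P ≤ p) with hT
  set k := T.card with hk
  have hPk : (P:ℕ) ^ k ≤ d := by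
    have h1 : P ^ k ≤ ∏ p ∈ T, p := Finset.pow_card_le_prod T _ _ (fun p hp => (Finset.mem_filter.1 hp).2)
    have h2 : (∏ p ∈ T, p) ∣ d := by
      refine dvd_trans (Finset.prod_dvd_prod_of_subset T S _ (Finset.filter_subset _ _)) ?_
      exact Nat.prod_primeFactors_dvd d
    exact le_trans h1 (Nat.le_of_dvd (by omega) h2)
  have hcard : S.card ≤ P + k := by
    have h0 : T.card + (S.filter (fun a => ¬ P ≤ a)).card = S.card := by
      simpa using Finset.card_filter_add_card_filter_not (s := S) (p := fun p => P ≤ p)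
    have hsub : S.filter (fun p => ¬ P ≤ p) ⊆ Finset.range P := by
      intro p hp
      simp only [Finset.mem_filter, not_le] at hp
      exact Finset.mem_range.2 hp.2
    have := Finset.card_le_card hsub
    simp only [Finset.card_range] at this
    omega
  calc (3:ℝ) ^ S.card ≤ (3:ℝ) ^ (P + k) := by
        apply pow_le_pow_right₀ (by norm_num) hcard
    _ = 3 ^ P * (3:ℝ) ^ k := by rw [pow_add]
    _ ≤ 3 ^ P * (d:ℝ) ^ ε := by
        apply mul_le_mul_of_nonneg_left _ (by positivity)
        calc (3:ℝ) ^ k ≤ ((P:ℝ) ^ ε) ^ k := pow_le_pow_left₀ (by norm_num) hP3 k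
          _ = ((P:ℝ) ^ (k:ℕ)) ^ ε := by
              rw [← Real.rpow_natCast ((P:ℝ)^ε) k, ← Real.rpow_natCast (P:ℝ) k,
                ← Real.rpow_mul (by positivity), ← Real.rpow_mul (by positivity), mul_comm]
          _ ≤ (d:ℝ) ^ ε := by
              apply Real.rpow_le_rpow (by positivity) _ hε.le
              exact_mod_cast hPk

lemma exp_pow (q a m : ℕ) (hq : 0 < q) :
    Complex.exp (-(2 * (Real.pi:ℂ) * Complex.I * a * m / q))
      = Complex.exp ((-(2*Real.pi*((a % q : ℕ):ℝ)/q) : ℝ) * Complex.I) ^ m := by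
  obtain ⟨k, b, hkb⟩ : ∃ k b : ℕ, q * k + b = a ∧ b = a % q := ⟨a/q, a%q, Nat.div_add_mod a q, rfl⟩
  obtain ⟨hkb, rfl⟩ := hkb
  rw [← Complex.exp_nat_mul, Complex.exp_eq_exp_iff_exists_int]
  refine ⟨-(k * m : ℤ), ?_⟩
  have hq0 : (q:ℂ) ≠ 0 := by
    exact_mod_cast Nat.cast_ne_zero.2 hq.ne'
  have ha : ((a:ℕ):ℂ) = (q:ℂ) * (k:ℂ) + ((a % q : ℕ):ℂ) := by
    exact_mod_cast (congrArg (Nat.cast : ℕ → ℂ) hkb).symm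
  rw [ha]
  push_cast
  field_simp
  ring

noncomputable def Bq (q b : ℕ) : ℝ := (q:ℝ)/(2*b) + (q:ℝ)/(2*((q:ℝ)-b))

lemma Bq_sum (q : ℕ) (hq : 3 ≤ q) (hlog1 : 1 ≤ Real.log q) :
    ∑ b ∈ Finset.Icc 1 (q-1), Bq q b ≤ 2 * q * Real.log q := by
  have hq0 : (0:ℝ) < q := by exact_mod_cast (by omega : 0 < q)
  unfold Bq
  rw [Finset.sum_add_distrib]
  have h2 : ∑ b ∈ Finset.Icc 1 (q-1), (q:ℝ)/(2*((q:ℝ)-b))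
      = ∑ b ∈ Finset.Icc 1 (q-1), (q:ℝ)/(2*b) := by
    exact reflect_sum q (fun t => (q:ℝ)/(2*t))
  rw [h2, ← two_mul]
  have h3 : (2:ℝ) * ∑ b ∈ Finset.Icc 1 (q-1), (q:ℝ)/(2*b)
      = (q:ℝ) * ∑ b ∈ Finset.Icc 1 (q-1), (1:ℝ)/b := by
    rw [Finset.mul_sum, Finset.mul_sum]
    apply Finset.sum_congr rfl
    intro b hb
    simp only [Finset.mem_Icc] at hb
    have hb0 : (0:ℝ) < b := by exact_mod_cast hb.1
    field_simp
  rw [h3]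
  have h4 : ∑ b ∈ Finset.Icc 1 (q-1), (1:ℝ)/b ≤ 1 + Real.log (q-1 : ℕ) :=
    harm_sum (q-1) (by omega)
  have h5 : Real.log ((q-1 : ℕ) : ℝ) ≤ Real.log q := by
    apply Real.log_le_log (by exact_mod_cast (by omega : 0 < q - 1))
    exact_mod_cast Nat.sub_le q 1
  calc (q:ℝ) * ∑ b ∈ Finset.Icc 1 (q-1), (1:ℝ)/b ≤ (q:ℝ) * (1 + Real.log q) := by
        apply mul_le_mul_of_nonneg_left (by linarith) hq0.le
    _ ≤ (q:ℝ) * (2 * Real.log q) := by nlinarith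
    _ = 2 * q * Real.log q := by ring

/-- For a Selberg-type upper-bound sieve weight
`w(n) = Σ_{d ∣ n} λ_d` supported on `[1,x]` with `x < q`, where `λ_d` vanishes for
`d > D` and for non-squarefree `d`, and `|λ_d| ≤ 3^{ν(d)}`, the `L¹` norm of the
additive Fourier transform satisfies `Σ_{r=1}^{q-1} |ŵ(r)| ≪ q · D^{1+o(1)} · log q`
as `q → ∞`:  for every `ε > 0` there are `C` and `q₀` making the bound
`C · q · D^{1+ε} · log q` valid for all primes `q ≥ q₀`. -/
theorem stmt12 : ∀ ε : ℝ, 0 < ε → ∃ C : ℝ, 0 < C ∧ ∃ q0 : ℕ,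
    ∀ (q x D : ℕ) (w lam : ℕ → ℝ),
      Nat.Prime q → q0 ≤ q → x < q → 1 ≤ D →
      (∀ d, D < d → lam d = 0) →
      (∀ d, ¬ Squarefree d → lam d = 0) →
      (∀ d, |lam d| ≤ (3 : ℝ) ^ d.primeFactors.card) →
      (∀ n, 1 ≤ n → n ≤ x → w n = ∑ d ∈ n.divisors, lam d) →
      ∑ r ∈ Finset.Icc 1 (q - 1),
          ‖∑ n ∈ Finset.Icc 1 x,
            (w n : ℂ) * Complex.exp (-(2 * Real.pi * Complex.I * r * n / q))‖ ≤
        C * q * (D : ℝ) ^ ((1 : ℝ) + ε) * Real.log q := by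
  intro ε hε
  obtain ⟨A, hA, hAd⟩ := nu_bound ε hε
  refine ⟨4*A, by positivity, 3, ?_⟩
  intro q x D w lam hq hq3 hxq hD hlamD _hsf hlam3 hw
  have hq2 : 2 ≤ q := hq.two_le
  have hq0 : (0:ℝ) < q := by exact_mod_cast (by omega : 0 < q)
  have hD0 : (0:ℝ) < D := by exact_mod_cast hD
  have hlog1 : 1 ≤ Real.log q := by
    have he : Real.exp 1 ≤ q := by
      have h1 := Real.exp_one_lt_d9
      have h2 : (3:ℝ) ≤ q := by exact_mod_cast hq3
      nlinarith
    calc (1:ℝ) = Real.log (Real.exp 1) := (Real.log_exp 1).symm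
      _ ≤ Real.log q := Real.log_le_log (Real.exp_pos 1) he
  -- step 1 : rewrite the inner sum
  have hS : ∀ r : ℕ, (∑ n ∈ Finset.Icc 1 x,
        (w n : ℂ) * Complex.exp (-(2 * Real.pi * Complex.I * r * n / q)))
      = ∑ d ∈ Finset.Icc 1 x, ∑ m ∈ Finset.Icc 1 (x/d),
          (lam d : ℂ) * Complex.exp (-(2 * Real.pi * Complex.I * r * (d*m : ℕ) / q)) := by
    intro r
    rw [Finset.sum_congr rfl (fun n hn => ?_),
      swap_div x (fun d n => (lam d : ℂ) * Complex.exp (-(2 * Real.pi * Complex.I * r * n / q)))]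
    simp only [Finset.mem_Icc] at hn
    rw [hw n hn.1 hn.2]
    push_cast
    rw [Finset.sum_mul]
  -- step 2 : per (r,d) geometric bound
  have hG : ∀ r ∈ Finset.Icc 1 (q-1), ∀ d ∈ Finset.Icc 1 x,
      ‖∑ m ∈ Finset.Icc 1 (x/d),
          Complex.exp (-(2 * Real.pi * Complex.I * r * (d*m : ℕ) / q))‖
        ≤ Bq q ((r*d) % q) := by
    intro r hr d hd
    simp only [Finset.mem_Icc] at hr hd
    have hnd : ¬ q ∣ r * d := by
      intro hdvd
      rcases (Nat.Prime.dvd_mul hq).1 hdvd with h | h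
      · exact absurd (Nat.le_of_dvd (by omega) h) (by omega)
      · exact absurd (Nat.le_of_dvd (by omega) h) (by omega)
    have hb1 : 1 ≤ (r*d) % q := by
      rcases Nat.eq_zero_or_pos ((r*d) % q) with h | h
      · exact absurd (Nat.dvd_iff_mod_eq_zero.2 h) hnd
      · omega
    have hbq : (r*d) % q < q := Nat.mod_lt _ (by omega)
    have heq : ∀ m : ℕ, Complex.exp (-(2 * Real.pi * Complex.I * r * (d*m : ℕ) / q))
        = Complex.exp ((-(2*Real.pi*(((r*d) % q : ℕ):ℝ)/q) : ℝ) * Complex.I) ^ m := by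
      intro m
      rw [← exp_pow q (r*d) m (by omega)]
      congr 1
      push_cast
      ring
    rw [Finset.sum_congr rfl (fun m _ => heq m)]
    exact geom_bound q ((r*d) % q) (x/d) hb1 hbq
  -- step 3 : assemble
  have key : ∑ r ∈ Finset.Icc 1 (q - 1),
      ‖∑ n ∈ Finset.Icc 1 x,
        (w n : ℂ) * Complex.exp (-(2 * Real.pi * Complex.I * r * n / q))‖
      ≤ ∑ d ∈ Finset.Icc 1 x, |lam d| * (2 * q * Real.log q) := by
    have h1 : ∀ r ∈ Finset.Icc 1 (q-1),
        ‖∑ n ∈ Finset.Icc 1 x,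
          (w n : ℂ) * Complex.exp (-(2 * Real.pi * Complex.I * r * n / q))‖
        ≤ ∑ d ∈ Finset.Icc 1 x, |lam d| * Bq q ((r*d) % q) := by
      intro r hr
      rw [hS r]
      simp_rw [← Finset.mul_sum]
      refine (norm_sum_le _ _).trans ?_
      apply Finset.sum_le_sum
      intro d hd
      rw [norm_mul, Complex.norm_real, Real.norm_eq_abs]
      exact mul_le_mul_of_nonneg_left (hG r hr d hd) (abs_nonneg _)
    refine (Finset.sum_le_sum h1).trans ?_
    rw [Finset.sum_comm]
    apply Finset.sum_le_sum
    intro d hd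
    rw [← Finset.mul_sum]
    have hdq : ¬ q ∣ d := by
      simp only [Finset.mem_Icc] at hd
      intro h
      exact absurd (Nat.le_of_dvd (by omega) h) (by omega)
    rw [mul_mod_bij q d hq hdq (Bq q)]
    exact mul_le_mul_of_nonneg_left (Bq_sum q hq3 hlog1) (abs_nonneg _)
  refine key.trans ?_
  rw [← Finset.sum_mul]
  have hlam_sum : ∑ d ∈ Finset.Icc 1 x, |lam d| ≤ A * (D:ℝ) ^ ((1:ℝ)+ε) := by
    have h1 : ∀ d ∈ Finset.Icc 1 x, |lam d| ≤ if d ≤ D then A * (D:ℝ)^ε else 0 := by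
      intro d hd
      simp only [Finset.mem_Icc] at hd
      by_cases hdD : d ≤ D
      · simp only [hdD, if_true]
        refine (hlam3 d).trans ((hAd d hd.1).trans ?_)
        have hde : (d:ℝ)^ε ≤ (D:ℝ)^ε :=
          Real.rpow_le_rpow (by positivity) (by exact_mod_cast hdD) hε.le
        exact mul_le_mul_of_nonneg_left hde hA.le
      · simp only [hdD, if_false]
        rw [hlamD d (by omega)]
        simp
    refine (Finset.sum_le_sum h1).trans ?_
    rw [← Finset.sum_filter]
    rw [Finset.sum_const, nsmul_eq_mul]
    have hcard : ((Finset.Icc 1 x).filter (fun d => d ≤ D)).card ≤ D := by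
      have hsub : (Finset.Icc 1 x).filter (fun d => d ≤ D) ⊆ Finset.Icc 1 D := by
        intro d hd
        simp only [Finset.mem_filter, Finset.mem_Icc] at hd ⊢
        omega
      calc _ ≤ (Finset.Icc 1 D).card := Finset.card_le_card hsub
        _ = D := by rw [Nat.card_Icc]; omega
    calc (((Finset.Icc 1 x).filter (fun d => d ≤ D)).card : ℝ) * (A * (D:ℝ)^ε)
        ≤ (D:ℝ) * (A * (D:ℝ)^ε) := by
          apply mul_le_mul_of_nonneg_right _ (by positivity)
          exact_mod_cast hcard
      _ = A * (D:ℝ) ^ ((1:ℝ)+ε) := by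
          rw [Real.rpow_add hD0, Real.rpow_one]; ring
  calc (∑ d ∈ Finset.Icc 1 x, |lam d|) * (2 * q * Real.log q)
      ≤ (A * (D:ℝ) ^ ((1:ℝ)+ε)) * (2 * q * Real.log q) := by
        apply mul_le_mul_of_nonneg_right hlam_sum (by positivity)
    _ ≤ 4*A * q * (D : ℝ) ^ ((1 : ℝ) + ε) * Real.log q := by
        have h1 : (0:ℝ) ≤ A * (D:ℝ) ^ ((1:ℝ)+ε) * q * Real.log q := by positivity
        have hq1 : (1:ℝ) ≤ q := by exact_mod_cast (by omega : 1 ≤ q)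
        nlinarith [Real.rpow_nonneg hD0.le ((1:ℝ)+ε), Real.log_nonneg hq1]
    _ = 4*A * q * (D : ℝ) ^ ((1 : ℝ) + ε) * Real.log q := rfl
end
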